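/- If the quantified Boolean formula ∃y.∀x.φ(y,x) (with |y| = |x| = k) is false, then the transition system TS_φ ∈ P_Σ2^k is unsafe: starting from Init_k, after iterating through all 2^k values of y (each with all 2^k values of x), the error bit e becomes true. -/

import Mathlib

/-- A state of the transition system `TS_φ`: two `k`-bit vectors `y, x` and
three flags `a, b, e`. -/
structure St (k : ℕ) where
  y : Fin k → Bool
  x : Fin k → Bool
  a : Bool
  b : Bool
  e : Bool

/-- The numeric value of a bit-vector (bit `i` has weight `2^i`). -/
def bvToNat {k : ℕ} (v : Fin k → Bool) : ℕ :=
  ∑ i : Fin k, if v i then 2 ^ (i : ℕ) else 0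

/-- The bit-vector of a natural number. -/
def natToBv (k : ℕ) (m : ℕ) : Fin k → Bool := fun i => m.testBit i

/-- One (deterministic) step of `TS_φ`: evaluate `φ(y,x)`; if false set `a := true`;
at `x = 1…1`, if `a` is still false set `b := false`; at `x = 1…1` increment `y`
(lexicographically), reset `a` and set `x := 0`, otherwise increment `x`;
at the end of the whole iteration (`y = 1…1` and `x = 1…1` in the pre-state)
set `e := b`. -/
def step {k : ℕ} (φ : (Fin k → Bool) → (Fin k → Bool) → Bool) (s : St k) : St k :=
  let a1 : Bool := if φ s.y s.x then s.a else true
  let xmax : Bool := decide (∀ i, s.x i = true)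
  let ymax : Bool := decide (∀ i, s.y i = true)
  let b1 : Bool := if xmax && !a1 then false else s.b
  { y := if xmax then natToBv k (bvToNat s.y + 1) else s.y
    x := if xmax then (fun _ => false) else natToBv k (bvToNat s.x + 1)
    a := if xmax then false else a1
    b := b1
    e := if xmax && ymax then b1 else s.e }

/-- The initial states of `TS_φ`: `y = 0`, `x = 0`, `a = false`, `b = true`, `e = false`. -/
def InitSt (k : ℕ) : Set (St k) :=
  {s | s.y = (fun _ => false) ∧ s.x = (fun _ => false) ∧
       s.a = false ∧ s.b = true ∧ s.e = false}

/-- The bad states of `TS_φ`: `e = true`. -/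
def BadSt (k : ℕ) : Set (St k) := {s | s.e = true}

/-- The transition relation of `TS_φ`. -/
def delta {k : ℕ} (φ : (Fin k → Bool) → (Fin k → Bool) → Bool) : Set (St k × St k) :=
  {p | p.2 = step φ p.1}

/-- Reachability in `TS_φ`. -/
def Reach {k : ℕ} (φ : (Fin k → Bool) → (Fin k → Bool) → Bool) (s : St k) : Prop :=
  ∃ s₀ ∈ InitSt k, Relation.ReflTransGen (fun u v => (u, v) ∈ delta φ) s₀ s

lemma bvToNat_bit {k : ℕ} (v : Fin (k+1) → Bool) :
    bvToNat v = Nat.bit (v 0) (bvToNat (fun j : Fin k => v j.succ)) := by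
  rw [Nat.bit_val, bvToNat, Fin.sum_univ_succ, bvToNat, Finset.mul_sum]
  have : ∀ j : Fin k, (if v j.succ then 2 ^ ((j.succ : Fin (k+1)) : ℕ) else 0)
      = 2 * (if v j.succ then 2 ^ (j : ℕ) else 0) := by
    intro j
    by_cases hv : v j.succ <;> simp [hv, pow_succ, mul_comm]
  rw [Finset.sum_congr rfl (fun j _ => this j)]
  cases hv : v 0 <;> simp [hv] <;> omega

lemma bvToNat_testBit {k : ℕ} (v : Fin k → Bool) (i : ℕ) :
    (bvToNat v).testBit i = if h : i < k then v ⟨i, h⟩ else false := by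
  induction k generalizing i with
  | zero => simp [bvToNat]
  | succ k ih =>
    rw [bvToNat_bit]
    cases i with
    | zero => simp [Nat.testBit_bit_zero]
    | succ i =>
      rw [Nat.testBit_bit_succ, ih]
      by_cases h : i < k
      · simp [h, Nat.succ_lt_succ h, Fin.succ]
      · simp [h, fun hh => h (Nat.lt_of_succ_lt_succ hh)]

lemma bvToNat_lt {k : ℕ} (v : Fin k → Bool) : bvToNat v < 2 ^ k := by
  induction k with
  | zero => simp [bvToNat]
  | succ k ih =>
    rw [bvToNat_bit]
    exact Nat.bit_lt_two_pow_succ_iff.mpr (ih _)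

lemma natToBv_bvToNat {k : ℕ} (v : Fin k → Bool) : natToBv k (bvToNat v) = v := by
  funext i
  rw [natToBv, bvToNat_testBit]
  simp [i.isLt]

lemma bvToNat_natToBv {k : ℕ} {j : ℕ} (hj : j < 2 ^ k) : bvToNat (natToBv k j) = j := by
  apply Nat.eq_of_testBit_eq
  intro i
  rw [bvToNat_testBit]
  by_cases h : i < k
  · simp [h, natToBv]
  · simp only [h, dif_neg, not_false_iff]
    exact (Nat.testBit_eq_false_of_lt (lt_of_lt_of_le hj (Nat.pow_le_pow_right (by norm_num) (le_of_not_gt h)))).symm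

lemma natToBv_zero (k : ℕ) : natToBv k 0 = fun _ => false := by
  funext i; simp [natToBv]

lemma natToBv_max_iff {k : ℕ} {j : ℕ} (hj : j < 2 ^ k) :
    (∀ i : Fin k, natToBv k j i = true) ↔ j = 2 ^ k - 1 := by
  constructor
  · intro hall
    apply Nat.eq_of_testBit_eq
    intro i
    rw [Nat.testBit_two_pow_sub_one]
    by_cases h : i < k
    · simpa [h, natToBv] using hall ⟨i, h⟩
    · rw [decide_eq_false h]
      exact (Nat.testBit_eq_false_of_lt (lt_of_lt_of_le hj (Nat.pow_le_pow_right (by norm_num) (le_of_not_gt h))))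
  · rintro rfl i
    simp [natToBv, Nat.testBit_two_pow_sub_one, i.isLt]

lemma cycle {k : ℕ} (φ : (Fin k → Bool) → (Fin k → Bool) → Bool) :
    ∀ n j, 2 ^ k - j ≤ n → j < 2 ^ k → ∀ (y : Fin k → Bool) (a e : Bool),
    (a = true ∨ ∃ x', j ≤ bvToNat x' ∧ φ y x' = false) →
    Relation.ReflTransGen (fun u v => (u, v) ∈ delta φ)
      ⟨y, natToBv k j, a, true, e⟩
      ⟨natToBv k (bvToNat y + 1), fun _ => false, false, true,
        (decide (∀ i, y i = true) || e)⟩ := by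
  intro n
  induction n with
  | zero => intro j hn hj; omega
  | succ n ih =>
    intro j hn hj y a e hcov
    by_cases hmax : j = 2 ^ k - 1
    · -- last x of the cycle: a1 is true
      have hxmax : ∀ i : Fin k, natToBv k j i = true := (natToBv_max_iff hj).mpr hmax
      have ha1 : (if φ y (natToBv k j) then a else true) = true := by
        rcases hcov with ha | ⟨x', hle, hφ⟩
        · subst ha; cases φ y (natToBv k j) <;> simp
        · have hx'lt := bvToNat_lt x'
          have : bvToNat x' = j := by omega
          have hx' : x' = natToBv k j := by rw [← this, natToBv_bvToNat]
          rw [← hx', hφ]; simp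
      apply Relation.ReflTransGen.single
      show _ = step φ _
      simp only [step]
      simp [hxmax, ha1, Bool.or_comm]
    · have hxnmax : ¬ (∀ i : Fin k, natToBv k j i = true) := fun hc => hmax ((natToBv_max_iff hj).mp hc)
      have hj1 : j + 1 < 2 ^ k := by omega
      have hstep : step φ ⟨y, natToBv k j, a, true, e⟩
          = ⟨y, natToBv k (j + 1), (if φ y (natToBv k j) then a else true), true, e⟩ := by
        simp only [step]
        simp [hxnmax, bvToNat_natToBv hj]
      have hcov' : ((if φ y (natToBv k j) then a else true) = true)
          ∨ ∃ x', j + 1 ≤ bvToNat x' ∧ φ y x' = false := by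
        rcases hcov with ha | ⟨x', hle, hφ⟩
        · subst ha; left; cases φ y (natToBv k j) <;> simp
        · rcases eq_or_lt_of_le hle with heq | hlt
          · have hx' : x' = natToBv k j := by rw [heq, natToBv_bvToNat]
            left; rw [← hx', hφ]; simp
          · right; exact ⟨x', hlt, hφ⟩
      exact Relation.ReflTransGen.head hstep.symm
        (ih (j + 1) (by omega) hj1 y _ e hcov')

lemma restLem {k : ℕ} (φ : (Fin k → Bool) → (Fin k → Bool) → Bool)
    (h : ∀ y, ∃ x, φ y x = false) :
    ∀ n j, 2 ^ k - j ≤ n → j < 2 ^ k →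
    ∃ s : St k, Relation.ReflTransGen (fun u v => (u, v) ∈ delta φ)
      ⟨natToBv k j, fun _ => false, false, true, false⟩ s ∧ s.e = true := by
  intro n
  induction n with
  | zero => intro j hn hj; omega
  | succ n ih =>
    intro j hn hj
    obtain ⟨x', hx'⟩ := h (natToBv k j)
    have hcyc := cycle φ (2 ^ k) 0 (by omega) (by positivity) (natToBv k j) false false
      (Or.inr ⟨x', Nat.zero_le _, hx'⟩)
    rw [natToBv_zero, bvToNat_natToBv hj] at hcyc
    by_cases hmax : j = 2 ^ k - 1
    · refine ⟨_, hcyc, ?_⟩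
      simp [(natToBv_max_iff hj).mpr hmax]
    · have hymax : ¬ (∀ i : Fin k, natToBv k j i = true) :=
        fun hc => hmax ((natToBv_max_iff hj).mp hc)
      have hpos : 0 < 2 ^ k := by positivity
      obtain ⟨s, hs, hse⟩ := ih (j + 1) (by omega) (by omega)
      refine ⟨s, ?_, hse⟩
      refine Relation.ReflTransGen.trans ?_ hs
      simpa [hymax] using hcyc

/-- If `∃y.∀x.φ(y,x)` is false (every `y` has a falsifying `x`), then `TS_φ` is
unsafe: a bad state (with `e = true`) is reachable from the initial states. -/
theorem tsPhi_unsafe_of_qbf_false (k : ℕ)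
    (φ : (Fin k → Bool) → (Fin k → Bool) → Bool)
    (h : ∀ y, ∃ x, φ y x = false) :
    ∃ s : St k, Reach φ s ∧ s ∈ BadSt k := by
  obtain ⟨s, hs, hse⟩ := restLem φ h (2 ^ k) 0 (Nat.sub_le _ _) (by positivity)
  rw [natToBv_zero] at hs
  exact ⟨s, ⟨_, ⟨rfl, rfl, rfl, rfl, rfl⟩, hs⟩, hse⟩
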